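/- Invariance of total weights under rotor-routing: let G be a locally finite graph with rotor sequences, h: G → ℝ a weight function, and define particle weights W_P(t) = ∑_x σ_t(x)h(x) and rotor weights W_R(t) = ∑_x w(x, u_t(x)) where w(x,0) = 0 and w(x,k) = w(x,k-1) + h(x) - h(x_{k mod d(x)}). Then for all times t, t' ≥ 0, W_P(t) + W_R(t) = W_P(t') + W_R(t'). -/

import Mathlib

/-- Invariance of total weights under rotor-routing: if at each time step exactly one
particle makes one step of rotor-router walk, then the sum of particle weights
`W_P(t) = ∑_x σ_t(x)h(x)` and rotor weights `W_R(t) = ∑_x w(x, u_t(x))`, where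
`w(x,0) = 0` and `w(x,k) = w(x,k-1) + h(x) - h(x_{k mod d(x)})`, is constant in time. -/
theorem rotor_weight_invariance
    {V : Type*} (G : SimpleGraph V) [DecidableRel G.Adj] [G.LocallyFinite]
    [DecidableEq V]
    -- rotor sequences: `nbr x i` is the `i`-th neighbour of `x`, cyclically
    (nbr : V → ℕ → V)
    (hnbr_adj : ∀ x i, G.Adj x (nbr x i))
    (hnbr_period : ∀ x i, nbr x (i + G.degree x) = nbr x i)
    (h : V → ℝ)
    -- the rotor weight function
    (w : V → ℕ → ℝ)
    (hw0 : ∀ x, w x 0 = 0)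
    (hw : ∀ x k, w x (k + 1) = w x k + h x - h (nbr x ((k + 1) % G.degree x)))
    -- the routing dynamics: at time `t` the particle at `xseq t` makes one rotor step
    (xseq : ℕ → V) (σ : ℕ → V → ℕ) (u : ℕ → V → ℕ)
    (hσ0fin : (Function.support (σ 0)).Finite)
    (hu0 : ∀ x, u 0 x = 0)
    (hocc : ∀ t, 1 ≤ σ t (xseq t))
    (hσ : ∀ t y, σ (t + 1) y =
        σ t y - (if y = xseq t then 1 else 0)
          + (if y = nbr (xseq t) ((u t (xseq t) + 1) % G.degree (xseq t)) then 1 else 0))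
    (hu : ∀ t y, u (t + 1) y = u t y + if y = xseq t then 1 else 0) :
    ∀ t t' : ℕ,
      (∑ᶠ x, (σ t x : ℝ) * h x) + (∑ᶠ x, w x (u t x))
        = (∑ᶠ x, (σ t' x : ℝ) * h x) + (∑ᶠ x, w x (u t' x)) := by
  -- main induction: finiteness of supports and constancy of the total weight
  have main : ∀ t : ℕ, (Function.support (σ t)).Finite ∧
      (Function.support (u t)).Finite ∧
      (∑ᶠ x, (σ t x : ℝ) * h x) + (∑ᶠ x, w x (u t x))
        = (∑ᶠ x, (σ 0 x : ℝ) * h x) + (∑ᶠ x, w x (u 0 x)) := by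
    intro t
    induction t with
    | zero =>
      refine ⟨hσ0fin, ?_, rfl⟩
      have : Function.support (u 0) = ∅ := by
        ext x; simp [hu0]
      simp [this]
    | succ t ih =>
      obtain ⟨hσfin, hufin, hS⟩ := ih
      set a := xseq t with ha
      set b := nbr a ((u t a + 1) % G.degree a) with hb
      have hab : a ≠ b := (hnbr_adj a _).ne
      -- support finiteness at time t+1
      have hσfin' : (Function.support (σ (t + 1))).Finite := by
        refine (hσfin.union (Set.finite_singleton b)).subset ?_
        intro x hx
        rw [Function.mem_support, hσ t x] at hx
        by_cases hxb : x = b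
        · exact Or.inr hxb
        · left
          rw [Function.mem_support]
          simp only [show nbr (xseq t) ((u t (xseq t) + 1) % G.degree (xseq t)) = b from hb.symm, hxb, if_false] at hx
          omega
      have hufin' : (Function.support (u (t + 1))).Finite := by
        refine (hufin.union (Set.finite_singleton a)).subset ?_
        intro x hx
        rw [Function.mem_support, hu t x] at hx
        by_cases hxa : x = a
        · exact Or.inr hxa
        · left
          rw [Function.mem_support]
          simp only [← ha, hxa, if_false] at hx
          omega
      refine ⟨hσfin', hufin', ?_⟩
      rw [← hS]
      -- pointwise identity for the particle weights
      have hcast : ∀ x, ((σ (t + 1) x : ℝ)) =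
          (σ t x : ℝ) - (if x = a then 1 else 0) + (if x = b then 1 else 0) := by
        intro x
        rw [hσ t x]
        rw [show xseq t = a from ha.symm,
          show nbr a ((u t a + 1) % G.degree a) = b from hb.symm]
        by_cases hxa : x = a
        · have h1 : 1 ≤ σ t x := by rw [hxa]; exact hocc t
          by_cases hxb : x = b
          · exact absurd (hxa.symm.trans hxb) hab
          · simp only [if_pos hxa, if_neg hxb, add_zero, Nat.cast_sub h1,
              Nat.cast_one]
        · by_cases hxb : x = b
          · simp only [if_neg hxa, if_pos hxb, Nat.sub_zero, Nat.cast_add,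
              Nat.cast_one, sub_zero]
          · simp only [if_neg hxa, if_neg hxb, Nat.sub_zero, add_zero, sub_zero]
      have hWP : (∑ᶠ x, (σ (t + 1) x : ℝ) * h x)
          = (∑ᶠ x, (σ t x : ℝ) * h x) + (-h a + h b) := by
        have hpt : ∀ x, (σ (t + 1) x : ℝ) * h x
            = (σ t x : ℝ) * h x
              + ((if x = a then -h a else 0) + (if x = b then h b else 0)) := by
          intro x
          rw [hcast x]
          by_cases hxa : x = a
          · by_cases hxb : x = b
            · exact absurd (hxa.symm.trans hxb) hab
            · rw [hxa]
              simp only [eq_self_iff_true, if_true, if_neg (hxa ▸ hxb)]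
              ring
          · by_cases hxb : x = b
            · rw [hxb]
              simp only [eq_self_iff_true, if_true, if_neg (hxb ▸ hxa)]
              ring
            · simp only [if_neg hxa, if_neg hxb]
              ring
        rw [finsum_congr hpt]
        have fin1 : (Function.support fun x => (σ t x : ℝ) * h x).Finite := by
          refine hσfin.subset ?_
          intro x hx
          rw [Function.mem_support] at hx ⊢
          intro h0; apply hx; simp [h0]
        have fin2 : (Function.support fun x =>
            (if x = a then -h a else 0) + (if x = b then h b else 0)).Finite := by
          refine (Set.finite_singleton a |>.union (Set.finite_singleton b)).subset ?_
          intro x hx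
          rw [Function.mem_support] at hx
          by_contra hc
          simp only [Set.mem_union, Set.mem_singleton_iff, not_or] at hc
          simp [hc.1, hc.2] at hx
        have fin2a : (Function.support fun x => if x = a then -h a else 0).Finite := by
          refine (Set.finite_singleton a).subset ?_
          intro x hx
          rw [Function.mem_support] at hx
          by_contra hc
          simp only [Set.mem_singleton_iff] at hc
          simp [hc] at hx
        have fin2b : (Function.support fun x => if x = b then h b else 0).Finite := by
          refine (Set.finite_singleton b).subset ?_
          intro x hx
          rw [Function.mem_support] at hx
          by_contra hc
          simp only [Set.mem_singleton_iff] at hc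
          simp [hc] at hx
        rw [finsum_add_distrib fin1 fin2, finsum_add_distrib fin2a fin2b]
        rw [finsum_eq_single (fun x => if x = a then -h a else 0) a
          (by intro x hx; simp [hx]),
          finsum_eq_single (fun x => if x = b then h b else 0) b
          (by intro x hx; simp [hx])]
        simp
      have hWR : (∑ᶠ x, w x (u (t + 1) x))
          = (∑ᶠ x, w x (u t x)) + (h a - h b) := by
        have hpt : ∀ x, w x (u (t + 1) x)
            = w x (u t x) + (if x = a then h a - h b else 0) := by
          intro x
          rw [hu t x, show xseq t = a from ha.symm]
          by_cases hxa : x = a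
          · rw [hxa]
            simp only [eq_self_iff_true, if_true]
            rw [hw a (u t a), show nbr a ((u t a + 1) % G.degree a) = b from hb.symm]
            ring
          · simp only [if_neg hxa, add_zero]
        rw [finsum_congr hpt]
        have fin1 : (Function.support fun x => w x (u t x)).Finite := by
          refine hufin.subset ?_
          intro x hx
          rw [Function.mem_support] at hx ⊢
          intro h0
          apply hx
          rw [h0, hw0]
        have fin2 : (Function.support fun x => if x = a then h a - h b else 0).Finite := by
          refine (Set.finite_singleton a).subset ?_
          intro x hx
          rw [Function.mem_support] at hx
          by_contra hc
          simp only [Set.mem_singleton_iff] at hc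
          simp [hc] at hx
        rw [finsum_add_distrib fin1 fin2,
          finsum_eq_single (fun x => if x = a then h a - h b else 0) a
          (by intro x hx; simp [hx])]
        simp
      rw [hWP, hWR]
      ring
  intro t t'
  rw [(main t).2.2, (main t').2.2]
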